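/- Let X and Y be integrable random vectors in R^N with Σ_i X^i = Σ_i Y^i almost surely (zero-sum difference), and let (I, J) be a uniformly random ordered pair of distinct indices in {1,…,N}, independent of (X, Y). Then E[|X − Y|₁] ≤ (N − 1)·E[|X^I − X^J − Y^I + Y^J|]. -/

import Mathlib

open MeasureTheory ProbabilityTheory

lemma pointwise_key {N : ℕ} (d : Fin N → ℝ) (hd : ∑ i, d i = 0) :
    (N : ℝ) * ∑ i, |d i| ≤ ∑ p : Fin N × Fin N, |d p.1 - d p.2| := by
  rw [Fintype.sum_prod_type, Finset.mul_sum]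
  apply Finset.sum_le_sum
  intro i _
  calc (N:ℝ) * |d i| = |∑ j : Fin N, (d i - d j)| := by
        rw [Finset.sum_sub_distrib, hd, sub_zero, Finset.sum_const, Finset.card_univ,
          Fintype.card_fin, nsmul_eq_mul, abs_mul, Nat.abs_cast]
    _ ≤ ∑ j, |d i - d j| := Finset.abs_sum_le_sum_abs _ _

theorem stmt_15 {Ω : Type*} [MeasureSpace Ω] [IsProbabilityMeasure (ℙ : Measure Ω)]
    (N : ℕ) (hN : 2 ≤ N)
    (X Y : Ω → (Fin N → ℝ)) (hX_meas : Measurable X) (hY_meas : Measurable Y)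
    (hX_int : Integrable X) (hY_int : Integrable Y)
    (hzero : ∀ᵐ ω ∂ℙ, ∑ i, (X ω i - Y ω i) = 0)
    (IJ : Ω → Fin N × Fin N) (hIJ_meas : Measurable IJ)
    (hIJ_unif : ∀ i j : Fin N, i ≠ j →
      ℙ {ω | IJ ω = (i, j)} = 1 / ((N : ENNReal) * ((N : ENNReal) - 1)))
    (hIJ_distinct : ∀ᵐ ω ∂ℙ, (IJ ω).1 ≠ (IJ ω).2)
    (hindep : IndepFun IJ (fun ω => (X ω, Y ω))) :
    (∫ ω, ∑ i, |X ω i - Y ω i|) ≤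
      ((N : ℝ) - 1) *
        ∫ ω, |X ω (IJ ω).1 - X ω (IJ ω).2 - Y ω (IJ ω).1 + Y ω (IJ ω).2| := by
  have hNpos : (0:ℝ) < N := by positivity
  -- componentwise integrability
  have hXi : ∀ i, Integrable (fun ω => X ω i) := by
    intro i
    refine hX_int.norm.mono' ((measurable_pi_apply i).comp hX_meas).aestronglyMeasurable ?_
    filter_upwards with ω
    simpa using norm_le_pi_norm (X ω) i
  have hYi : ∀ i, Integrable (fun ω => Y ω i) := by
    intro i
    refine hY_int.norm.mono' ((measurable_pi_apply i).comp hY_meas).aestronglyMeasurable ?_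
    filter_upwards with ω
    simpa using norm_le_pi_norm (Y ω) i
  -- f p : the pair functional
  set f : Fin N × Fin N → Ω → ℝ :=
    fun p ω => |X ω p.1 - X ω p.2 - Y ω p.1 + Y ω p.2| with hf
  have hf_int : ∀ p, Integrable (f p) := by
    intro p
    exact ((((hXi p.1).sub (hXi p.2)).sub (hYi p.1)).add (hYi p.2)).abs
  have hf_meas : ∀ p, Measurable (f p) := by
    intro p
    apply Measurable.abs
    exact ((((measurable_pi_apply p.1).comp hX_meas).sub
      ((measurable_pi_apply p.2).comp hX_meas)).sub
      ((measurable_pi_apply p.1).comp hY_meas)).add ((measurable_pi_apply p.2).comp hY_meas)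
  -- indicator functions
  set ind : Fin N × Fin N → Ω → ℝ := fun p ω => if IJ ω = p then (1:ℝ) else 0 with hind
  have hind_meas : ∀ p, Measurable (ind p) := by
    intro p
    exact (measurable_of_countable (fun q => if q = p then (1:ℝ) else 0)).comp hIJ_meas
  have hprod_int : ∀ p, Integrable (fun ω => ind p ω * f p ω) := by
    intro p
    refine (hf_int p).bdd_mul (hind_meas p).aestronglyMeasurable (c := 1) (Filter.Eventually.of_forall fun ω => ?_)
    simp only [hind]
    split <;> simp
  -- the second integrand equals a finite sum
  have hsum_eq : ∀ ω, |X ω (IJ ω).1 - X ω (IJ ω).2 - Y ω (IJ ω).1 + Y ω (IJ ω).2|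
      = ∑ p : Fin N × Fin N, ind p ω * f p ω := by
    intro ω
    simp only [hind, ite_mul, one_mul, zero_mul]
    rw [Finset.sum_ite_eq (Finset.univ : Finset (Fin N × Fin N)) (IJ ω) (fun p => f p ω)]
    simp [hf]
  -- independence computation for each p
  have hkey : ∀ p : Fin N × Fin N,
      (∫ ω, ind p ω * f p ω) = (ℙ {ω | IJ ω = p}).toReal * ∫ ω, f p ω := by
    intro p
    have hφ : Measurable (fun q : Fin N × Fin N => if q = p then (1:ℝ) else 0) :=
      measurable_of_countable _
    have hψ : Measurable (fun w : (Fin N → ℝ) × (Fin N → ℝ) =>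
        |w.1 p.1 - w.1 p.2 - w.2 p.1 + w.2 p.2|) := by
      apply Measurable.abs
      exact ((((measurable_pi_apply p.1).comp measurable_fst).sub
        ((measurable_pi_apply p.2).comp measurable_fst)).sub
        ((measurable_pi_apply p.1).comp measurable_snd)).add
        ((measurable_pi_apply p.2).comp measurable_snd)
    have h := (hindep.comp hφ hψ).integral_mul_eq_mul_integral
      (Integrable.aestronglyMeasurable ?_) (Integrable.aestronglyMeasurable ?_)
    · have hs : MeasurableSet {ω | IJ ω = p} := hIJ_meas (MeasurableSet.singleton p)
      have h1 : ∫ ω, ((fun q => if q = p then (1:ℝ) else 0) ∘ IJ) ω = (ℙ {ω | IJ ω = p}).toReal := by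
        have heq : ((fun q => if q = p then (1:ℝ) else 0) ∘ IJ)
            = Set.indicator {ω | IJ ω = p} (1 : Ω → ℝ) := by
          ext ω
          by_cases hω : IJ ω = p <;> simp [hω, Set.indicator]
        rw [heq, integral_indicator_one hs, measureReal_def]
      calc (∫ ω, ind p ω * f p ω)
          = ∫ ω, (((fun q => if q = p then (1:ℝ) else 0) ∘ IJ) *
              ((fun w : (Fin N → ℝ) × (Fin N → ℝ) =>
                |w.1 p.1 - w.1 p.2 - w.2 p.1 + w.2 p.2|) ∘ fun ω => (X ω, Y ω))) ω := rfl
        _ = _ := by rw [h, h1]; rfl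
    · refine (integrable_const (1:ℝ)).mono' ((hφ.comp hIJ_meas)).aestronglyMeasurable ?_
      filter_upwards with ω
      simp only [Function.comp]
      split <;> simp
    · exact hf_int p
  -- probability value
  have hP : ∀ p : Fin N × Fin N, p.1 ≠ p.2 →
      (ℙ {ω | IJ ω = p}).toReal = 1 / ((N:ℝ) * ((N:ℝ) - 1)) := by
    intro p hp
    rw [show p = (p.1, p.2) from rfl, hIJ_unif p.1 p.2 hp]
    rw [ENNReal.toReal_div, ENNReal.toReal_mul]
    rw [ENNReal.toReal_sub_of_le (by exact_mod_cast Nat.one_le_of_lt hN) (by simp)]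
    simp
  have hfdiag : ∀ p : Fin N × Fin N, p.1 = p.2 → f p = 0 := by
    intro p hp
    funext ω
    simp [hf, hp]
  -- value of each summand
  have hval : ∀ p : Fin N × Fin N,
      (∫ ω, ind p ω * f p ω) = (1 / ((N:ℝ) * ((N:ℝ) - 1))) * ∫ ω, f p ω := by
    intro p
    by_cases hp : p.1 = p.2
    · rw [hkey p, hfdiag p hp]; simp
    · rw [hkey p, hP p hp]
  -- compute the RHS integral
  have hRHS : (∫ ω, |X ω (IJ ω).1 - X ω (IJ ω).2 - Y ω (IJ ω).1 + Y ω (IJ ω).2|)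
      = (1 / ((N:ℝ) * ((N:ℝ) - 1))) * ∑ p : Fin N × Fin N, ∫ ω, f p ω := by
    calc (∫ ω, |X ω (IJ ω).1 - X ω (IJ ω).2 - Y ω (IJ ω).1 + Y ω (IJ ω).2|)
        = ∫ ω, ∑ p : Fin N × Fin N, ind p ω * f p ω := by
          congr 1; funext ω; exact hsum_eq ω
      _ = ∑ p : Fin N × Fin N, ∫ ω, ind p ω * f p ω :=
          integral_finset_sum _ (fun p _ => hprod_int p)
      _ = ∑ p : Fin N × Fin N, (1 / ((N:ℝ) * ((N:ℝ) - 1))) * ∫ ω, f p ω := by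
          exact Finset.sum_congr rfl (fun p _ => hval p)
      _ = _ := by rw [Finset.mul_sum]
  -- LHS bound
  have hLHS : (∫ ω, ∑ i, |X ω i - Y ω i|)
      ≤ (1 / (N:ℝ)) * ∑ p : Fin N × Fin N, ∫ ω, f p ω := by
    have hint1 : Integrable (fun ω => ∑ i, |X ω i - Y ω i|) :=
      integrable_finset_sum _ (fun i _ => ((hXi i).sub (hYi i)).abs)
    have hint2 : Integrable (fun ω => (1 / (N:ℝ)) * ∑ p : Fin N × Fin N, f p ω) :=
      (integrable_finset_sum _ (fun p _ => hf_int p)).const_mul _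
    have hmono : (∫ ω, ∑ i, |X ω i - Y ω i|)
        ≤ ∫ ω, (1 / (N:ℝ)) * ∑ p : Fin N × Fin N, f p ω := by
      refine integral_mono_ae hint1 hint2 ?_
      filter_upwards [hzero] with ω hω
      have := pointwise_key (fun i => X ω i - Y ω i) hω
      have hfeq : ∀ p : Fin N × Fin N,
          |(X ω p.1 - Y ω p.1) - (X ω p.2 - Y ω p.2)| = f p ω := by
        intro p; rw [hf]; ring_nf
      calc (∑ i, |X ω i - Y ω i|)
          = (1 / (N:ℝ)) * ((N:ℝ) * ∑ i, |X ω i - Y ω i|) := by field_simp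
        _ ≤ (1 / (N:ℝ)) * ∑ p : Fin N × Fin N,
              |(X ω p.1 - Y ω p.1) - (X ω p.2 - Y ω p.2)| :=
            mul_le_mul_of_nonneg_left this (by positivity)
        _ = (1 / (N:ℝ)) * ∑ p : Fin N × Fin N, f p ω := by
            congr 1; exact Finset.sum_congr rfl (fun p _ => hfeq p)
    calc (∫ ω, ∑ i, |X ω i - Y ω i|) ≤ _ := hmono
      _ = (1 / (N:ℝ)) * ∑ p : Fin N × Fin N, ∫ ω, f p ω := by
        rw [integral_const_mul, integral_finset_sum _ (fun p _ => hf_int p)]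
  rw [hRHS]
  have hN1 : (0:ℝ) < (N:ℝ) - 1 := by
    have : (2:ℝ) ≤ N := by exact_mod_cast hN
    linarith
  have : ((N:ℝ) - 1) * ((1 / ((N:ℝ) * ((N:ℝ) - 1))) * ∑ p : Fin N × Fin N, ∫ ω, f p ω)
      = (1 / (N:ℝ)) * ∑ p : Fin N × Fin N, ∫ ω, f p ω := by
    field_simp
  rw [this]
  exact hLHS
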